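/- Let n, k ≥ 1, let s ≥ 1, and let c_1 ≥ c_2 ≥ … ≥ c_s ≥ 1 be integers with c_1 ≤ min(n, k) and, if s ≥ 2, c_1 + c_2 ≤ n. For each 1 ≤ m ≤ s choose a subset I_m ⊆ {1, …, k} with |I_m| = c_m, and let P_m ∈ 𝒫(M_{k×n}) be the determinant of the c_m×c_m submatrix of the variable matrix x = (x_{ij}) on the rows indexed by I_m (in increasing order) and the last c_m columns n − c_m + 1, …, n. Then the product P_1·P_2⋯P_s is a harmonic polynomial, i.e. it is annihilated by every operator Δ_{ij}, 1 ≤ i, j ≤ k. -/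

import Mathlib

open MvPolynomial TensorProduct

set_option synthInstance.maxHeartbeats 1000000
set_option maxHeartbeats 1000000

noncomputable section

abbrev P (n k : ℕ) : Type := MvPolynomial (Fin k × Fin n) ℂ

/-- r_{ij} = Σ_m x_{im} x_{j,n+1-m} -/
def rpoly (n k : ℕ) (i j : Fin k) : P n k :=
  ∑ m : Fin n, X (i, m) * X (j, m.rev)

/-- the subalgebra of invariants -/
def InvAlg (n k : ℕ) : Subalgebra ℂ (P n k) :=
  Algebra.adjoin ℂ (Set.range fun p : Fin k × Fin k => rpoly n k p.1 p.2)

/-- Laplace operators -/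
def Δop (n k : ℕ) (i j : Fin k) : P n k →ₗ[ℂ] P n k :=
  ∑ m : Fin n, ((pderiv (i, m)).toLinearMap ∘ₗ (pderiv (j, m.rev)).toLinearMap)

/-- harmonic polynomials -/
def Harm (n k : ℕ) : Submodule ℂ (P n k) :=
  ⨅ (i : Fin k) (j : Fin k), LinearMap.ker (Δop n k i j)

/-- multiplication map restricted to a subspace F of harmonics -/
def φF (n k : ℕ) (F : Submodule ℂ (P n k)) :
    (InvAlg n k) ⊗[ℂ] F →ₗ[ℂ] P n k :=
  TensorProduct.lift ((LinearMap.mul ℂ (P n k)).compl₁₂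
    (InvAlg n k).val.toLinearMap F.subtype)

def φ (n k : ℕ) : (InvAlg n k) ⊗[ℂ] (Harm n k) →ₗ[ℂ] P n k := φF n k (Harm n k)

namespace PM

variable {n k : ℕ}

lemma Δop_apply (i j : Fin k) (f : P n k) :
    Δop n k i j f = ∑ m : Fin n, pderiv (i, m) (pderiv (j, m.rev) f) := by
  rw [Δop, LinearMap.sum_apply]; rfl

lemma mem_Harm {f : P n k} : f ∈ Harm n k ↔ ∀ i j : Fin k, Δop n k i j f = 0 := by
  simp [Harm, Submodule.mem_iInf, LinearMap.mem_ker]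

lemma prod_X_eq_monomial {ι : Type*} (t : Finset ι) (f : ι → Fin k × Fin n) :
    (∏ q ∈ t, (X (f q) : P n k)) = monomial (∑ q ∈ t, Finsupp.single (f q) 1) 1 := by
  classical
  induction t using Finset.induction with
  | empty => simp [monomial_zero', C_1]
  | insert _ _ hq ih =>
    rw [Finset.prod_insert hq, Finset.sum_insert hq, ih, X, monomial_mul, one_mul]

lemma sum_single_apply {ι : Type*} [Fintype ι] [DecidableEq ι] {w : ι → Fin k × Fin n}
    (hw : Function.Injective w) (u : Fin k × Fin n) :
    (∑ q : ι, Finsupp.single (w q) 1) u = if ∃ q, w q = u then 1 else 0 := by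
  classical
  rw [Finsupp.finset_sum_apply]
  by_cases h : ∃ q, w q = u
  · obtain ⟨q0, hq0⟩ := h
    rw [Finset.sum_eq_single q0]
    · rw [if_pos ⟨q0, hq0⟩, Finsupp.single_apply, if_pos hq0]
    · intro q _ hne
      rw [Finsupp.single_apply, if_neg]
      intro hqu; exact hne (hw (hqu.trans hq0.symm))
    · simp
  · rw [if_neg h, Finset.sum_eq_zero]
    intro q _
    rw [Finsupp.single_apply, if_neg]
    exact fun hqu => h ⟨q, hqu⟩

end PM

namespace PM2
open PM Equiv
variable {n k : ℕ}

def colF (n : ℕ) (c : ℕ) (hc : c ≤ n) (q : Fin c) : Fin n := ⟨n - c + q.val, by omega⟩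

def minor (n k c : ℕ) (hc : c ≤ n) (r : Fin c → Fin k) : P n k :=
  Matrix.det (Matrix.of fun p q : Fin c => (X (r p, colF n c hc q) : P n k))

def wfun (n : ℕ) (k c : ℕ) (hc : c ≤ n) (r : Fin c → Fin k) (σ : Perm (Fin c)) (q : Fin c) :
    Fin k × Fin n := (r (σ q), colF n c hc q)

lemma wfun_inj (hc : c ≤ n) (r : Fin c → Fin k) (σ : Perm (Fin c)) :
    Function.Injective (wfun n k c hc r σ) := by
  intro a b h
  have : (colF n c hc a).val = (colF n c hc b).val := congrArg (fun u => u.2.val) h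
  simp only [colF] at this
  exact Fin.ext (by omega)

def sexp (n k c : ℕ) (hc : c ≤ n) (r : Fin c → Fin k) (σ : Perm (Fin c)) :
    (Fin k × Fin n) →₀ ℕ := ∑ q : Fin c, Finsupp.single (wfun n k c hc r σ q) 1

lemma sexp_apply (hc : c ≤ n) (r : Fin c → Fin k) (σ : Perm (Fin c)) (u : Fin k × Fin n) :
    sexp n k c hc r σ u = if ∃ q, wfun n k c hc r σ q = u then 1 else 0 := by
  rw [sexp]
  convert sum_single_apply (wfun_inj hc r σ) u

lemma minor_eq (hc : c ≤ n) (r : Fin c → Fin k) :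
    minor n k c hc r =
      ∑ σ : Perm (Fin c), ((Perm.sign σ : ℤ) : ℂ) • monomial (sexp n k c hc r σ) 1 := by
  rw [minor, Matrix.det_apply]
  refine Finset.sum_congr rfl fun σ _ => ?_
  rw [Units.smul_def, ← Int.cast_smul_eq_zsmul ℂ]
  congr 1
  exact prod_X_eq_monomial Finset.univ (fun q => (r (σ q), colF n c hc q))

def Tterm (n k c : ℕ) (hc : c ≤ n) (r : Fin c → Fin k) (i j : Fin k) (m : Fin n)
    (σ : Perm (Fin c)) : P n k :=
  pderiv (i, m) (pderiv (j, m.rev) (monomial (sexp n k c hc r σ) 1))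

lemma Tterm_eq (hc : c ≤ n) (r : Fin c → Fin k) (i j : Fin k) (m : Fin n) (σ : Perm (Fin c)) :
    Tterm n k c hc r i j m σ =
      monomial (sexp n k c hc r σ - Finsupp.single (j, m.rev) 1 - Finsupp.single (i, m) 1)
        (((sexp n k c hc r σ (j, m.rev) : ℂ)) *
          ((((sexp n k c hc r σ - Finsupp.single (j, m.rev) 1 : (Fin k × Fin n) →₀ ℕ)) (i, m) : ℂ))) := by
  rw [Tterm, pderiv_monomial, pderiv_monomial, one_mul]

end PM2
namespace PM2
open PM Equiv
variable {n k c : ℕ}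

lemma Tterm_zero_no_j (hc : c ≤ n) (r : Fin c → Fin k) {i j : Fin k}
    (hj : ∀ p, r p ≠ j) (m : Fin n) (σ : Perm (Fin c)) :
    Tterm n k c hc r i j m σ = 0 := by
  rw [Tterm_eq]
  have h0 : sexp n k c hc r σ (j, m.rev) = 0 := by
    rw [sexp_apply, if_neg]
    rintro ⟨q, hq⟩
    exact hj (σ q) (congrArg Prod.fst hq)
  rw [h0]
  simp

lemma Tterm_zero_no_i (hc : c ≤ n) (r : Fin c → Fin k) {i j : Fin k}
    (hi : ∀ p, r p ≠ i) (m : Fin n) (σ : Perm (Fin c)) :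
    Tterm n k c hc r i j m σ = 0 := by
  rw [Tterm_eq]
  have h0 : sexp n k c hc r σ (i, m) = 0 := by
    rw [sexp_apply, if_neg]
    rintro ⟨q, hq⟩
    exact hi (σ q) (congrArg Prod.fst hq)
  rw [Finsupp.tsub_apply, h0]
  simp

lemma Tterm_zero_diag (hc : c ≤ n) (r : Fin c → Fin k) (hr : Function.Injective r)
    (i : Fin k) (m : Fin n) (σ : Perm (Fin c)) :
    Tterm n k c hc r i i m σ = 0 := by
  rw [Tterm_eq]
  by_cases hm : m.rev = m
  · have h0 : (sexp n k c hc r σ - Finsupp.single (i, m.rev) 1 :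
        (Fin k × Fin n) →₀ ℕ) (i, m) = 0 := by
      rw [Finsupp.tsub_apply, sexp_apply, hm, Finsupp.single_eq_same]
      split <;> simp
    rw [h0]
    simp
  · by_cases h1 : ∃ q, wfun n k c hc r σ q = (i, m.rev)
    · have hnot : ¬ ∃ q, wfun n k c hc r σ q = (i, m) := by
        rintro ⟨q2, hq2⟩
        obtain ⟨q1, hq1⟩ := h1
        have e1 : σ q1 = σ q2 := hr (by
          have a1 := congrArg Prod.fst hq1
          have a2 := congrArg Prod.fst hq2
          simp only [wfun] at a1 a2
          rw [a1, a2])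
        have e2 : q1 = q2 := σ.injective e1
        apply hm
        have c1 := congrArg Prod.snd hq1
        have c2 := congrArg Prod.snd hq2
        simp only [wfun] at c1 c2
        rw [← c1, e2, c2]
      have h0 : (sexp n k c hc r σ - Finsupp.single (i, m.rev) 1 :
          (Fin k × Fin n) →₀ ℕ) (i, m) = 0 := by
        rw [Finsupp.tsub_apply, sexp_apply, if_neg hnot]; simp
      rw [h0]
      simp
    · have h0 : sexp n k c hc r σ (i, m.rev) = 0 := by rw [sexp_apply, if_neg h1]
      rw [h0]
      simp

end PM2
namespace PM2
open PM Equiv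
variable {n k c : ℕ}

lemma Tterm_swap (hc : c ≤ n) (r : Fin c → Fin k) (hr : Function.Injective r)
    {i j : Fin k} (hij : i ≠ j) (pi pj : Fin c) (hpi : r pi = i) (hpj : r pj = j)
    (m : Fin n) (σ : Perm (Fin c)) :
    Tterm n k c hc r i j m σ = Tterm n k c hc r i j m.rev (Equiv.swap pi pj * σ) := by
  set τσ : Perm (Fin c) := Equiv.swap pi pj * σ with hτσ
  rw [Tterm_eq, Tterm_eq, Fin.rev_rev]
  have hne1 : ((j, m.rev) : Fin k × Fin n) ≠ (i, m) := by
    intro h; exact hij ((congrArg Prod.fst h).symm)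
  have hne2 : ((j, m) : Fin k × Fin n) ≠ (i, m.rev) := by
    intro h; exact hij ((congrArg Prod.fst h).symm)
  have hsub1 : (sexp n k c hc r σ - Finsupp.single (j, m.rev) 1 :
      (Fin k × Fin n) →₀ ℕ) (i, m) = sexp n k c hc r σ (i, m) := by
    rw [Finsupp.tsub_apply, Finsupp.single_apply, if_neg hne1, Nat.sub_zero]
  have hsub2 : (sexp n k c hc r τσ - Finsupp.single (j, m) 1 :
      (Fin k × Fin n) →₀ ℕ) (i, m.rev) = sexp n k c hc r τσ (i, m.rev) := by
    rw [Finsupp.tsub_apply, Finsupp.single_apply, if_neg hne2, Nat.sub_zero]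
  have key1 : ∀ q, wfun n k c hc r τσ q = (j, m) ↔ wfun n k c hc r σ q = (i, m) := by
    intro q
    simp only [wfun, Prod.mk.injEq, hτσ, Perm.mul_apply]
    constructor
    · rintro ⟨h1, h2⟩
      have e1 : Equiv.swap pi pj (σ q) = pj := hr (by rw [h1, hpj])
      have e2 : σ q = pi := by
        have := congrArg (Equiv.swap pi pj) e1
        rwa [Equiv.swap_apply_self, Equiv.swap_apply_right] at this
      exact ⟨by rw [e2, hpi], h2⟩
    · rintro ⟨h1, h2⟩
      have e1 : σ q = pi := hr (by rw [h1, hpi])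
      exact ⟨by rw [e1, Equiv.swap_apply_left, hpj], h2⟩
  have key2 : ∀ q, wfun n k c hc r τσ q = (i, m.rev) ↔ wfun n k c hc r σ q = (j, m.rev) := by
    intro q
    simp only [wfun, Prod.mk.injEq, hτσ, Perm.mul_apply]
    constructor
    · rintro ⟨h1, h2⟩
      have e1 : Equiv.swap pi pj (σ q) = pi := hr (by rw [h1, hpi])
      have e2 : σ q = pj := by
        have := congrArg (Equiv.swap pi pj) e1
        rwa [Equiv.swap_apply_self, Equiv.swap_apply_left] at this
      exact ⟨by rw [e2, hpj], h2⟩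
    · rintro ⟨h1, h2⟩
      have e1 : σ q = pj := hr (by rw [h1, hpj])
      exact ⟨by rw [e1, Equiv.swap_apply_right, hpi], h2⟩
  have hA' : sexp n k c hc r τσ (j, m) = sexp n k c hc r σ (i, m) := by
    rw [sexp_apply, sexp_apply]
    exact if_congr (exists_congr key1) rfl rfl
  have hB' : sexp n k c hc r τσ (i, m.rev) = sexp n k c hc r σ (j, m.rev) := by
    rw [sexp_apply, sexp_apply]
    exact if_congr (exists_congr key2) rfl rfl
  rw [hsub1, hsub2, hA', hB']
  by_cases hA : sexp n k c hc r σ (j, m.rev) = 0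
  · rw [hA]; simp
  by_cases hB : sexp n k c hc r σ (i, m) = 0
  · rw [hB]; simp
  -- both nonzero: extract witnesses
  have hq1 : ∃ q, wfun n k c hc r σ q = (j, m.rev) := by
    by_contra h; rw [sexp_apply, if_neg h] at hA; exact hA rfl
  have hq2 : ∃ q, wfun n k c hc r σ q = (i, m) := by
    by_contra h; rw [sexp_apply, if_neg h] at hB; exact hB rfl
  obtain ⟨q1, hq1⟩ := hq1
  obtain ⟨q2, hq2⟩ := hq2
  have hq21 : q2 ≠ q1 := by
    intro h; rw [h, hq1] at hq2; exact hij (congrArg Prod.fst hq2).symm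
  have hσq1 : σ q1 = pj := hr (by
    have := congrArg Prod.fst hq1; simp only [wfun] at this; rw [this, hpj])
  have hσq2 : σ q2 = pi := hr (by
    have := congrArg Prod.fst hq2; simp only [wfun] at this; rw [this, hpi])
  have hcol1 : colF n c hc q1 = m.rev := congrArg Prod.snd hq1
  have hcol2 : colF n c hc q2 = m := congrArg Prod.snd hq2
  have hw1 : wfun n k c hc r τσ q1 = (i, m.rev) := by
    simp only [wfun, hτσ, Perm.mul_apply, hσq1, Equiv.swap_apply_right, hpi, hcol1]
  have hw2 : wfun n k c hc r τσ q2 = (j, m) := by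
    simp only [wfun, hτσ, Perm.mul_apply, hσq2, Equiv.swap_apply_left, hpj, hcol2]
  set R : (Fin k × Fin n) →₀ ℕ :=
    ∑ q ∈ (Finset.univ.erase q1).erase q2, Finsupp.single (wfun n k c hc r σ q) 1 with hR
  have hq2mem : q2 ∈ Finset.univ.erase q1 := Finset.mem_erase.2 ⟨hq21, Finset.mem_univ q2⟩
  have d1 : sexp n k c hc r σ =
      Finsupp.single (j, m.rev) 1 + (Finsupp.single (i, m) 1 + R) := by
    rw [sexp, ← Finset.add_sum_erase _ _ (Finset.mem_univ q1),
      ← Finset.add_sum_erase _ _ hq2mem, hq1, hq2]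
  have hRR : ∑ q ∈ (Finset.univ.erase q1).erase q2,
      Finsupp.single (wfun n k c hc r τσ q) 1 = R := by
    refine Finset.sum_congr rfl fun q hq => ?_
    have h2 : q ≠ q2 := (Finset.mem_erase.1 hq).1
    have h1 : q ≠ q1 := (Finset.mem_erase.1 (Finset.mem_erase.1 hq).2).1
    have : Equiv.swap pi pj (σ q) = σ q := by
      apply Equiv.swap_apply_of_ne_of_ne
      · intro h; exact h2 (σ.injective (h.trans hσq2.symm))
      · intro h; exact h1 (σ.injective (h.trans hσq1.symm))
    simp only [wfun, hτσ, Perm.mul_apply, this]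
  have d2 : sexp n k c hc r τσ =
      Finsupp.single (i, m.rev) 1 + (Finsupp.single (j, m) 1 + R) := by
    rw [sexp, ← Finset.add_sum_erase _ _ (Finset.mem_univ q1),
      ← Finset.add_sum_erase _ _ hq2mem, hw1, hw2, hRR]
  have e1 : sexp n k c hc r σ - Finsupp.single (j, m.rev) 1 - Finsupp.single (i, m) 1 = R := by
    rw [d1, add_tsub_cancel_left, add_tsub_cancel_left]
  have e2 : sexp n k c hc r τσ - Finsupp.single (j, m) 1 - Finsupp.single (i, m.rev) 1 = R := by
    rw [d2, add_left_comm, add_tsub_cancel_left, add_tsub_cancel_left]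
  rw [e1, e2, mul_comm]

end PM2
namespace PM2
open PM Equiv
variable {n k c : ℕ}

lemma minor_harmonic (hc : c ≤ n) (r : Fin c → Fin k) (hr : Function.Injective r)
    (i j : Fin k) : Δop n k i j (minor n k c hc r) = 0 := by
  have expand : Δop n k i j (minor n k c hc r)
      = ∑ σ : Perm (Fin c), ((Perm.sign σ : ℤ) : ℂ) •
          ∑ m : Fin n, Tterm n k c hc r i j m σ := by
    rw [Δop_apply, minor_eq]
    simp only [map_sum, Derivation.map_smul]
    rw [Finset.sum_comm]
    exact Finset.sum_congr rfl fun σ _ => by rw [Finset.smul_sum]; rfl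
  by_cases hj : ∃ p, r p = j
  · by_cases hi : ∃ p, r p = i
    · by_cases hij : i = j
      · subst hij
        rw [expand]
        refine Finset.sum_eq_zero fun σ _ => ?_
        rw [Finset.sum_eq_zero fun m _ => Tterm_zero_diag hc r hr i m σ, smul_zero]
      · obtain ⟨pi, hpi⟩ := hi
        obtain ⟨pj, hpj⟩ := hj
        have hpij : pi ≠ pj := fun h => hij (by rw [← hpi, ← hpj, h])
        set F : Perm (Fin c) → P n k := fun σ => ((Perm.sign σ : ℤ) : ℂ) •
          ∑ m : Fin n, Tterm n k c hc r i j m σ with hF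
        have hFneg : ∀ σ, F (Equiv.swap pi pj * σ) = - F σ := by
          intro σ
          have hsum : ∑ m : Fin n, Tterm n k c hc r i j m (Equiv.swap pi pj * σ)
              = ∑ m : Fin n, Tterm n k c hc r i j m σ := by
            rw [Finset.sum_congr rfl fun m _ =>
              Tterm_swap hc r hr hij pi pj hpi hpj m σ]
            exact (Fintype.sum_equiv (Function.Involutive.toPerm _ Fin.rev_involutive)
              _ _ fun m => rfl).symm
          have hsgn : ((Perm.sign (Equiv.swap pi pj * σ) : ℤ) : ℂ)
              = - ((Perm.sign σ : ℤ) : ℂ) := by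
            rw [Perm.sign_mul, Perm.sign_swap hpij]
            push_cast
            ring
          rw [hF]
          simp only
          rw [hsum, hsgn, neg_smul]
        have hiter : ∑ σ : Perm (Fin c), F σ = - ∑ σ : Perm (Fin c), F σ := by
          conv_lhs => rw [← Equiv.sum_comp (Equiv.mulLeft (Equiv.swap pi pj)) F]
          simp only [Equiv.coe_mulLeft]
          rw [Finset.sum_congr rfl fun σ _ => hFneg σ, Finset.sum_neg_distrib]
        have h2 : (2 : ℂ) • ∑ σ : Perm (Fin c), F σ = 0 := by
          rw [two_smul]
          nth_rewrite 1 [hiter]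
          rw [neg_add_cancel]
        rw [expand]
        have := (smul_eq_zero.1 h2).resolve_left (by norm_num)
        exact this
    · push_neg at hi
      rw [expand]
      refine Finset.sum_eq_zero fun σ _ => ?_
      rw [Finset.sum_eq_zero fun m _ => Tterm_zero_no_i hc r hi m σ, smul_zero]
  · push_neg at hj
    rw [expand]
    refine Finset.sum_eq_zero fun σ _ => ?_
    rw [Finset.sum_eq_zero fun m _ => Tterm_zero_no_j hc r hj m σ, smul_zero]

end PM2
namespace PM2
open PM Equiv
variable {n k c : ℕ}

lemma minor_mem_supported (hc : c ≤ n) (r : Fin c → Fin k) :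
    minor n k c hc r ∈ supported ℂ {u : Fin k × Fin n | n - c ≤ u.2.val} := by
  rw [minor, Matrix.det_apply]
  refine sum_mem fun σ _ => ?_
  rw [Units.smul_def]
  refine zsmul_mem (prod_mem fun q _ => ?_) _
  simp only [Matrix.of_apply]
  exact (X_mem_supported.2 (by simp only [Set.mem_setOf_eq, colF]; omega))

lemma pderiv_zero_of_supported {S : Set (Fin k × Fin n)} {f : P n k}
    (hf : f ∈ supported ℂ S) {u : Fin k × Fin n} (hu : u ∉ S) : pderiv u f = 0 :=
  pderiv_eq_zero_of_notMem_vars fun h => hu (mem_supported.1 hf h)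

lemma Δop_mul (i j : Fin k) (f g : P n k) :
    Δop n k i j (f * g) = Δop n k i j f * g + f * Δop n k i j g
      + ∑ m : Fin n, (pderiv (i, m) f * pderiv (j, m.rev) g
          + pderiv (j, m.rev) f * pderiv (i, m) g) := by
  have key : ∀ m : Fin n, pderiv (i, m) (pderiv (j, m.rev) (f * g))
      = pderiv (i, m) (pderiv (j, m.rev) f) * g + f * pderiv (i, m) (pderiv (j, m.rev) g)
        + (pderiv (i, m) f * pderiv (j, m.rev) g + pderiv (j, m.rev) f * pderiv (i, m) g) := by
    intro m
    rw [pderiv_mul, map_add, pderiv_mul, pderiv_mul]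
    ring
  rw [Δop_apply, Finset.sum_congr rfl fun m _ => key m, Finset.sum_add_distrib,
    Finset.sum_add_distrib, ← Finset.sum_mul, ← Finset.mul_sum, Δop_apply, Δop_apply]

lemma mul_harm {a b : ℕ} (hab : a + b ≤ n) {f g : P n k}
    (hf : ∀ i j, Δop n k i j f = 0) (hg : ∀ i j, Δop n k i j g = 0)
    (hfs : f ∈ supported ℂ {u : Fin k × Fin n | n - a ≤ u.2.val})
    (hgs : g ∈ supported ℂ {u : Fin k × Fin n | n - b ≤ u.2.val}) :
    ∀ i j, Δop n k i j (f * g) = 0 := by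
  intro i j
  rw [Δop_mul, hf, hg, zero_mul, mul_zero, zero_add, zero_add]
  refine Finset.sum_eq_zero fun m _ => ?_
  have hmlt := m.isLt
  have hrev : m.rev.val = n - (m.val + 1) := Fin.val_rev m
  have t1 : pderiv (i, m) f * pderiv (j, m.rev) g = 0 := by
    by_cases hm : m.val < n - a
    · rw [pderiv_zero_of_supported hfs (by simp only [Set.mem_setOf_eq]; omega), zero_mul]
    · rw [pderiv_zero_of_supported hgs (by simp only [Set.mem_setOf_eq]; omega), mul_zero]
  have t2 : pderiv (j, m.rev) f * pderiv (i, m) g = 0 := by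
    by_cases hm : m.rev.val < n - a
    · rw [pderiv_zero_of_supported hfs (by simp only [Set.mem_setOf_eq]; omega), zero_mul]
    · rw [pderiv_zero_of_supported hgs (by simp only [Set.mem_setOf_eq]; omega), mul_zero]
  rw [t1, t2, add_zero]

lemma prod_minors : ∀ (s : ℕ) (c : Fin s → ℕ) (hcn : ∀ m, c m ≤ n)
    (hpair : ∀ m m' : Fin s, m ≠ m' → c m + c m' ≤ n)
    (r : ∀ m, Fin (c m) → Fin k) (hr : ∀ m, Function.Injective (r m))
    (i j : Fin k), Δop n k i j (∏ m, minor n k (c m) (hcn m) (r m)) = 0 := by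
  intro s
  induction s with
  | zero =>
    intro c hcn hpair r hr i j
    simp [Δop_apply]
  | succ s ih =>
    intro c hcn hpair r hr i j
    rw [Fin.prod_univ_succ]
    set B : ℕ := Finset.univ.sup (fun m : Fin s => c m.succ) with hB
    have hab : c 0 + B ≤ n := by
      rcases Nat.eq_zero_or_pos s with hs0 | hs0
      · subst hs0
        simpa [hB] using hcn 0
      · have : (Finset.univ : Finset (Fin s)).Nonempty := by
          rw [Finset.univ_nonempty_iff]
          exact Fin.pos_iff_nonempty.1 hs0
        obtain ⟨m0, _, hm0⟩ := Finset.exists_mem_eq_sup _ this (fun m : Fin s => c m.succ)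
        rw [hB, hm0]
        exact hpair 0 m0.succ (Fin.succ_ne_zero m0).symm
    refine mul_harm hab (minor_harmonic (hcn 0) (r 0) (hr 0))
      (ih (fun m => c m.succ) (fun m => hcn m.succ)
        (fun m m' hne => hpair m.succ m'.succ (fun h => hne (Fin.succ_injective s h)))
        (fun m => r m.succ) (fun m => hr m.succ))
      (minor_mem_supported (hcn 0) (r 0)) ?_ i j
    refine prod_mem fun m _ => ?_
    refine supported_mono ?_ (minor_mem_supported (hcn m.succ) (r m.succ))
    intro u hu
    simp only [Set.mem_setOf_eq] at hu ⊢
    have : c m.succ ≤ B := Finset.le_sup (f := fun m : Fin s => c m.succ) (Finset.mem_univ m)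
    omega

end PM2

/-- a product of right-justified minors of the variable matrix, whose
sizes c_1 ≥ … ≥ c_s ≥ 1 satisfy c_1 ≤ min(n,k) and (if s ≥ 2) c_1 + c_2 ≤ n, is a
harmonic polynomial. Here the m-th factor is the determinant of the submatrix of x on
the rows indexed by the strictly increasing map `rows m` and the last c_m columns. -/
theorem product_of_minors_harmonic (n k s : ℕ) (hn : 1 ≤ n) (hk : 1 ≤ k) (hs : 0 < s)
    (c : Fin s → ℕ)
    (hanti : ∀ i j : Fin s, i ≤ j → c j ≤ c i)
    (hpos : ∀ m : Fin s, 1 ≤ c m)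
    (hc1n : c ⟨0, hs⟩ ≤ n) (hc1k : c ⟨0, hs⟩ ≤ k)
    (hc12 : ∀ h2 : 2 ≤ s, c ⟨0, hs⟩ + c ⟨1, h2⟩ ≤ n)
    (rows : ∀ m : Fin s, Fin (c m) → Fin k)
    (hrows : ∀ m : Fin s, StrictMono (rows m)) :
    (∏ m : Fin s, Matrix.det (Matrix.of fun p q : Fin (c m) =>
      (X (rows m p, ⟨n - c m + q.val, by
          have hq := q.isLt
          have h1 := hanti ⟨0, hs⟩ m (Fin.mk_le_of_le_val (Nat.zero_le _))
          omega⟩) : P n k))) ∈ Harm n k := by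
  rw [PM.mem_Harm]
  intro i j
  have hcn : ∀ m : Fin s, c m ≤ n :=
    fun m => le_trans (hanti ⟨0, hs⟩ m (by simp [Fin.le_def])) hc1n
  have hpair : ∀ m m' : Fin s, m ≠ m' → c m + c m' ≤ n := by
    intro m m' hne
    rcases lt_or_gt_of_ne hne with h | h
    · have hlt : m.val < m'.val := h
      have h2 : 2 ≤ s := by have := m'.isLt; omega
      calc c m + c m' ≤ c ⟨0, hs⟩ + c ⟨1, h2⟩ :=
            Nat.add_le_add (hanti ⟨0, hs⟩ m (by simp [Fin.le_def]))
              (hanti ⟨1, h2⟩ m' (by simp only [Fin.le_def]; omega))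
        _ ≤ n := hc12 h2
    · have hlt : m'.val < m.val := h
      have h2 : 2 ≤ s := by have := m.isLt; omega
      calc c m + c m' ≤ c ⟨1, h2⟩ + c ⟨0, hs⟩ :=
            Nat.add_le_add (hanti ⟨1, h2⟩ m (by simp only [Fin.le_def]; omega))
              (hanti ⟨0, hs⟩ m' (by simp [Fin.le_def]))
        _ ≤ n := by rw [Nat.add_comm]; exact hc12 h2
  exact PM2.prod_minors s c hcn hpair rows (fun m => (hrows m).injective) i j


end
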